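/- Let σ be a real symmetric positive definite 2×2 matrix satisfying C₀⁻¹ I ≤ σ ≤ C₀ I for some C₀ ≥ 1. Define the Beltrami coefficient μ = (−σ₁₁ + σ₂₂ − 2i σ₁₂)/(σ₁₁ + σ₂₂ + 2√(det σ)). Then |μ| ≤ (C₀ − 1)/(C₀ + 1) < 1. -/

import Mathlib

open Matrix

set_option maxHeartbeats 2000000 in
theorem beltrami_coeff_bound (s11 s12 s22 C0 : ℝ) (hC0 : 1 ≤ C0)
    (hlow : ((!![s11, s12; s12, s22] : Matrix (Fin 2) (Fin 2) ℝ) - C0⁻¹ • 1).PosSemidef)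
    (hup : ((C0 • 1 - !![s11, s12; s12, s22] : Matrix (Fin 2) (Fin 2) ℝ)).PosSemidef)
    (μ : ℂ)
    (hμ : μ = ((- s11 + s22 : ℝ) - 2 * (s12 : ℂ) * Complex.I) /
      ((s11 + s22 + 2 * Real.sqrt (s11 * s22 - s12 ^ 2) : ℝ) : ℂ)) :
    ‖μ‖ ≤ (C0 - 1) / (C0 + 1) ∧ (C0 - 1) / (C0 + 1) < 1 := by
  have hc : (0:ℝ) < C0 := lt_of_lt_of_le one_pos hC0
  have hci : C0 * C0⁻¹ = 1 := mul_inv_cancel₀ (ne_of_gt hc)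
  -- quadratic forms
  have qlow : ∀ u v : ℝ, 0 ≤ (s11 - C0⁻¹)*u^2 + 2*s12*u*v + (s22 - C0⁻¹)*v^2 := by
    intro u v
    have h := hlow.dotProduct_mulVec_nonneg ![u, v]
    simp [dotProduct, Matrix.mulVec, Fin.sum_univ_two, Matrix.sub_apply,
      Matrix.smul_apply, Matrix.one_apply] at h
    ring_nf at h ⊢
    linarith
  have qup : ∀ u v : ℝ, 0 ≤ (C0 - s11)*u^2 - 2*s12*u*v + (C0 - s22)*v^2 := by
    intro u v
    have h := hup.dotProduct_mulVec_nonneg ![u, v]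
    simp [dotProduct, Matrix.mulVec, Fin.sum_univ_two, Matrix.sub_apply,
      Matrix.smul_apply, Matrix.one_apply] at h
    ring_nf at h ⊢
    linarith
  have h11l : C0⁻¹ ≤ s11 := by have := qlow 1 0; nlinarith [this]
  have h22l : C0⁻¹ ≤ s22 := by have := qlow 0 1; nlinarith [this]
  have h11u : s11 ≤ C0 := by have := qup 1 0; nlinarith [this]
  have h22u : s22 ≤ C0 := by have := qup 0 1; nlinarith [this]
  have hd1 : s12^2 ≤ (s11 - C0⁻¹)*(s22 - C0⁻¹) := by
    have h := discrim_le_zero (a := s11 - C0⁻¹) (b := 2*s12) (c := s22 - C0⁻¹)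
      (fun x => by nlinarith [qlow x 1])
    rw [discrim] at h
    nlinarith [h]
  have hd2 : s12^2 ≤ (C0 - s11)*(C0 - s22) := by
    have h := discrim_le_zero (a := C0 - s11) (b := -(2*s12)) (c := C0 - s22)
      (fun x => by nlinarith [qup x 1])
    rw [discrim] at h
    nlinarith [h]
  -- inverse-free versions
  have h11l' : 1 ≤ C0 * s11 := by
    calc (1:ℝ) = C0 * C0⁻¹ := hci.symm
    _ ≤ C0 * s11 := mul_le_mul_of_nonneg_left h11l hc.le
  have h22l' : 1 ≤ C0 * s22 := by
    calc (1:ℝ) = C0 * C0⁻¹ := hci.symm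
    _ ≤ C0 * s22 := mul_le_mul_of_nonneg_left h22l hc.le
  have hd1' : C0^2 * s12^2 ≤ (C0*s11 - 1)*(C0*s22 - 1) := by
    have heq : (s11 - C0⁻¹)*(s22 - C0⁻¹)*C0^2 = (C0*s11 - 1)*(C0*s22 - 1) := by
      field_simp
    have h := mul_le_mul_of_nonneg_right hd1 (by positivity : (0:ℝ) ≤ C0^2)
    linarith [heq ▸ h]
  have hs : 0 < s11 + s22 := by nlinarith [h11l', h22l', hc]
  have hd0 : 0 < s11 * s22 - s12^2 := by
    nlinarith [hd1', h11l', h22l', mul_pos hc hc]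
  set r := Real.sqrt (s11 * s22 - s12 ^ 2) with hrdef
  have hr0 : 0 < r := Real.sqrt_pos.mpr hd0
  have hr2 : r^2 = s11 * s22 - s12^2 := Real.sq_sqrt hd0.le
  have hD : (0:ℝ) < s11 + s22 + 2*r := by linarith
  have h2r : 2*r ≤ s11 + s22 := by
    nlinarith [hr2, sq_nonneg (s11 - s22), sq_nonneg s12, hD]
  -- key inequality : C0 * (s11+s22) ≤ (C0^2+1) * r
  have keysq : C0^4*(s11+s22)^2 ≤ (C0^2+1)^2 * C0^2 * r^2 := by
    rw [hr2]
    rcases le_total (C0*(s11 + s22)) (C0^2 + 1) with hcase | hcase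
    · have hP : 0 ≤ (C0^2 + 1 - C0*(s11+s22)) * (C0^2*(C0*(s11+s22)) - (C0^2+1)) := by
        apply mul_nonneg (by linarith)
        have hcs2 : 0 ≤ C0*(s11+s22) - 2 := by linarith [h11l', h22l']
        have hsq : 1 ≤ C0^2 := by nlinarith [hC0, hc]
        have h := mul_nonneg (sq_nonneg C0) hcs2
        linarith [h, hsq]
      have H1 : 0 ≤ ((C0*s11 - 1)*(C0*s22 - 1) - C0^2 * s12^2) * (C0^2+1)^2 :=
        mul_nonneg (by linarith [hd1']) (by positivity)
      linarith [H1, hP]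
    · have hP : 0 ≤ (C0*(s11+s22) - (C0^2 + 1)) * (C0^2*(C0^2+1) - C0*(s11+s22)) := by
        apply mul_nonneg (by linarith)
        have hcs2c : C0*(s11+s22) ≤ 2*C0^2 := by
          linarith [mul_le_mul_of_nonneg_left h11u hc.le, mul_le_mul_of_nonneg_left h22u hc.le]
        have hsq : 1 ≤ C0^2 := by nlinarith [hC0, hc]
        have hc4 : C0^2 ≤ C0^4 := by nlinarith [mul_nonneg (sq_nonneg C0) (by linarith : (0:ℝ) ≤ C0^2 - 1)]
        linarith
      have H2 : 0 ≤ ((C0 - s11)*(C0 - s22) - s12^2) * (C0^2 * (C0^2+1)^2) :=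
        mul_nonneg (by linarith [hd2]) (by positivity)
      have H2b : 0 ≤ C0^2 * ((C0*(s11+s22) - (C0^2 + 1)) * (C0^2*(C0^2+1) - C0*(s11+s22))) :=
        mul_nonneg (by positivity) hP
      linarith [H2, H2b]
  have key : C0 * (s11+s22) ≤ (C0^2+1) * r := by
    have key' : C0^2*(s11+s22) ≤ (C0^2+1)*(C0*r) := by
      nlinarith [keysq, mul_pos hc hs, mul_pos (mul_pos hc hc) hs,
        mul_pos (mul_pos (by positivity : (0:ℝ) < C0^2+1) hc) hr0]
    rw [← mul_le_mul_iff_right₀ hc]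
    ring_nf
    ring_nf at key'
    linarith
  constructor
  · rw [hμ, norm_div]
    have hden : ‖((s11 + s22 + 2 * Real.sqrt (s11 * s22 - s12 ^ 2) : ℝ) : ℂ)‖
        = s11 + s22 + 2*r := by
      rw [Complex.norm_real, Real.norm_eq_abs, ← hrdef, abs_of_pos hD]
    have hnum : ‖((- s11 + s22 : ℝ) : ℂ) - 2 * (s12 : ℂ) * Complex.I‖
        = Real.sqrt ((-s11 + s22)^2 + (2*s12)^2) := by
      rw [Complex.norm_def, Complex.normSq_apply]
      norm_num
      ring_nf
    rw [hden, hnum, div_le_div_iff₀ hD (by linarith : (0:ℝ) < C0 + 1)]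
    have hXnn : (0:ℝ) ≤ (-s11 + s22)^2 + (2*s12)^2 := by positivity
    have lhs_eq : Real.sqrt ((-s11 + s22)^2 + (2*s12)^2) * (C0 + 1)
        = Real.sqrt (((-s11 + s22)^2 + (2*s12)^2) * (C0+1)^2) := by
      rw [Real.sqrt_mul hXnn, Real.sqrt_sq (by linarith : (0:ℝ) ≤ C0+1)]
    rw [lhs_eq]
    have rhs_eq : (C0 - 1) * (s11 + s22 + 2*r)
        = Real.sqrt (((C0-1) * (s11 + s22 + 2*r))^2) := by
      rw [Real.sqrt_sq (by nlinarith [hD] : (0:ℝ) ≤ (C0-1) * (s11 + s22 + 2*r))]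
    rw [rhs_eq]
    apply Real.sqrt_le_sqrt
    nlinarith [mul_nonneg hD.le (sub_nonneg.mpr key), hr2]
  · rw [div_lt_one (by linarith : (0:ℝ) < C0 + 1)]
    linarith
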